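/- For p ≥ 1 and conjugate exponent q (1/p + 1/q = 1), there exists a constant C > 0 such that for all natural numbers m, m! / (Γ(m/p + 1/2) · Γ(m/q + 1)) ≤ C · (2 p^(1/p) q^(1/q))^m. -/

import Mathlib

open Real intervalIntegral

lemma real_beta {a b : ℝ} (ha : 0 < a) (hb : 0 < b) :
    Real.Gamma a * Real.Gamma b
      = Real.Gamma (a + b) * ∫ t in (0:ℝ)..1, t ^ (a - 1) * (1 - t) ^ (b - 1) := by
  have h := Complex.Gamma_mul_Gamma_eq_betaIntegral (s := (a:ℂ)) (t := (b:ℂ))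
    (by simpa using ha) (by simpa using hb)
  have hbeta : Complex.betaIntegral (a:ℂ) (b:ℂ)
      = ((∫ t in (0:ℝ)..1, t ^ (a - 1) * (1 - t) ^ (b - 1) : ℝ) : ℂ) := by
    rw [Complex.betaIntegral, ← intervalIntegral.integral_ofReal]
    refine intervalIntegral.integral_congr fun x hx => ?_
    rw [Set.uIcc_of_le (by norm_num : (0:ℝ) ≤ 1)] at hx
    rw [Complex.ofReal_mul, Complex.ofReal_cpow hx.1,
      Complex.ofReal_cpow (by linarith [hx.2] : (0:ℝ) ≤ 1 - x)]
    push_cast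
    ring
  rw [hbeta, Complex.Gamma_ofReal, Complex.Gamma_ofReal, ← Complex.ofReal_add,
    Complex.Gamma_ofReal, ← Complex.ofReal_mul, ← Complex.ofReal_mul] at h
  exact_mod_cast h

lemma gamma_ratio (m : ℕ) : Real.Gamma (m + 1) ≤ 2 * Real.Gamma (m + 3/2) := by
  induction m with
  | zero =>
      have h12 : Real.Gamma (3/2) = √π / 2 := by
        have : (3/2 : ℝ) = 1/2 + 1 := by norm_num
        rw [this, Real.Gamma_add_one (by norm_num), Real.Gamma_one_half_eq]; ring
      simp only [Nat.cast_zero, zero_add, Real.Gamma_one, h12]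
      rw [(by ring : 2 * (√π / 2) = √π)]
      have : (1:ℝ) ≤ π := by linarith [Real.pi_gt_three]
      nlinarith [Real.sq_sqrt (by positivity : (0:ℝ) ≤ π), Real.sqrt_nonneg π]
  | succ n ih =>
      have h1 : Real.Gamma (↑(n+1) + 1) = (n + 1) * Real.Gamma (n + 1) := by
        push_cast
        rw [(by ring : (n:ℝ) + 1 + 1 = ((n:ℝ) + 1) + 1), Real.Gamma_add_one (by positivity)]
      have h2 : Real.Gamma (↑(n+1) + 3/2) = (n + 3/2) * Real.Gamma (n + 3/2) := by
        push_cast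
        rw [(by ring : (n:ℝ) + 1 + 3/2 = ((n:ℝ) + 3/2) + 1), Real.Gamma_add_one (by positivity)]
      have hpos : 0 < Real.Gamma ((n:ℝ) + 3/2) := Real.Gamma_pos_of_pos (by positivity)
      rw [h1, h2]
      nlinarith [ih, hpos]

/-- Stirling-type estimate: `m! / (Γ(m/p + 1/2) Γ(m/q + 1)) ≤ C (2 p^(1/p) q^(1/q))^m`. -/
theorem stirling_type_estimate (p q : ℝ) (hp : 1 ≤ p) (hpq : 1 / p + 1 / q = 1) :
    ∃ C > 0, ∀ m : ℕ,
      (Nat.factorial m : ℝ) /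
          (Real.Gamma ((m : ℝ) / p + 1 / 2) * Real.Gamma ((m : ℝ) / q + 1))
        ≤ C * (2 * p ^ ((1 : ℝ) / p) * q ^ ((1 : ℝ) / q)) ^ m := by
  have hp0 : 0 < p := lt_of_lt_of_le one_pos hp
  set α : ℝ := 1 / p with hαdef
  set β : ℝ := 1 / q with hβdef
  have hα0 : 0 < α := by positivity
  have hα1 : α ≤ 1 := by rw [hαdef, div_le_one hp0]; linarith
  have hβ0 : 0 ≤ β := by linarith [hpq]
  have hαβ : α + β = 1 := hpq
  have hq0 : 0 ≤ q := by
    rcases hβ0.eq_or_lt with h | h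
    · have : q = 0 := by
        have : q⁻¹ = 0 := by rw [← one_div]; exact h.symm
        exact inv_eq_zero.mp this
      simp [this]
    · exact (le_of_lt (by rwa [← one_div_pos] ))
  have hqinv : q⁻¹ = β := by rw [hβdef, one_div]
  have hpinv : p⁻¹ = α := by rw [hαdef, one_div]
  -- positivity of the powers
  have hαα : (0:ℝ) < α ^ α := rpow_pos_of_pos hα0 α
  have hββ : (0:ℝ) < β ^ β := by
    rcases hβ0.eq_or_lt with h | h
    · rw [← h, Real.rpow_zero]; norm_num
    · exact rpow_pos_of_pos h β
  set K : ℝ := α ^ α * β ^ β with hKdef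
  have hK : 0 < K := mul_pos hαα hββ
  -- rewrite the base
  have e1 : α ^ α = (p ^ ((1:ℝ)/p))⁻¹ := by
    rw [hαdef, one_div, Real.inv_rpow hp0.le]
  have e2 : β ^ β = (q ^ ((1:ℝ)/q))⁻¹ := by
    rw [hβdef, one_div, Real.inv_rpow hq0]
  have hppow : (0:ℝ) < p ^ ((1:ℝ)/p) := rpow_pos_of_pos hp0 _
  have hqpow : (0:ℝ) < q ^ ((1:ℝ)/q) := by
    rcases hq0.eq_or_lt with h | h
    · rw [← h]
      have : (1:ℝ)/(0:ℝ) = 0 := by norm_num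
      rw [this, Real.rpow_zero]; norm_num
    · exact rpow_pos_of_pos h _
  have hbase : 2 * p ^ ((1:ℝ)/p) * q ^ ((1:ℝ)/q) = 2 / K := by
    rw [hKdef, e1, e2]
    field_simp
  refine ⟨4 / α, by positivity, fun m => ?_⟩
  rw [hbase]
  set a : ℝ := (m:ℝ) / p + 1 / 2 with hadef
  set b : ℝ := (m:ℝ) / q + 1 with hbdef
  have hmp : (m:ℝ) / p = (m:ℝ) * α := by rw [div_eq_mul_inv, hpinv]
  have hmq : (m:ℝ) / q = (m:ℝ) * β := by rw [div_eq_mul_inv, hqinv]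
  have hm0 : (0:ℝ) ≤ (m:ℝ) := Nat.cast_nonneg m
  have hmp0 : (0:ℝ) ≤ (m:ℝ) / p := by rw [hmp]; positivity
  have hmq0 : (0:ℝ) ≤ (m:ℝ) / q := by rw [hmq]; positivity
  have ha : 0 < a := by rw [hadef]; linarith
  have hb : 0 < b := by rw [hbdef]; linarith
  have hab : a + b = (m:ℝ) + 3/2 := by
    rw [hadef, hbdef, hmp, hmq]
    have : (m:ℝ) * α + (m:ℝ) * β = m := by rw [← mul_add, hαβ, mul_one]
    linarith
  have hbeta := real_beta ha hb
  rw [hab] at hbeta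
  set f : ℝ → ℝ := fun t => t ^ (a - 1) * (1 - t) ^ (b - 1) with hfdef
  have hbm1 : b - 1 = (m:ℝ) * β := by rw [hbdef, hmq]; ring
  have ham1 : a - 1 = (m:ℝ) * α + (-(1/2) : ℝ) := by rw [hadef, hmp]; ring
  -- integrability
  have hcont : Continuous fun t : ℝ => (1 - t) ^ (b - 1) := by
    have hb1 : 0 ≤ b - 1 := by rw [hbm1]; positivity
    exact (Real.continuous_rpow_const hb1).comp (continuous_const.sub continuous_id)
  have hIntBig : IntervalIntegrable f MeasureTheory.volume 0 1 := by
    have := (intervalIntegrable_rpow' (by linarith : (-1:ℝ) < a - 1)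
      (a := (0:ℝ)) (b := (1:ℝ))).mul_continuousOn hcont.continuousOn
    simpa [hfdef, Pi.mul_apply] using this
  -- pointwise lower bound on [α/2, α]
  have hpoint : ∀ t ∈ Set.Icc (α/2) α, (K/2)^m ≤ f t := by
    intro t ht
    have ht0 : 0 < t := lt_of_lt_of_le (by positivity) ht.1
    have ht1 : t ≤ 1 := ht.2.trans hα1
    have hta : t ^ α *  (1 - t) ^ β ≥ K / 2 := by
      have h1 : (α/2) ^ α ≤ t ^ α := Real.rpow_le_rpow (by positivity) ht.1 hα0.le
      have h2 : (α/2) ^ α = α ^ α * (1/2:ℝ) ^ α := by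
        rw [← Real.mul_rpow hα0.le (by norm_num)]
        congr 1
        ring
      have h3 : (1/2:ℝ) ≤ (1/2:ℝ) ^ α := by
        have := Real.rpow_le_rpow_of_exponent_ge (by norm_num : (0:ℝ) < 1/2)
          (by norm_num : (1/2:ℝ) ≤ 1) hα1
        rwa [Real.rpow_one] at this
      have h4 : β ^ β ≤ (1 - t) ^ β := Real.rpow_le_rpow hβ0 (by linarith [ht.2, hαβ]) hβ0
      have h5 : α ^ α * (1/2:ℝ) ≤ t ^ α := by
        rw [h2] at h1
        have := mul_le_mul_of_nonneg_left h3 hαα.le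
        linarith
      have h6 : α ^ α * (1/2:ℝ) * β ^ β ≤ t ^ α * (1 - t) ^ β :=
        mul_le_mul h5 h4 hββ.le (Real.rpow_nonneg ht0.le α)
      have h7 : K/2 = α ^ α * (1/2:ℝ) * β ^ β := by rw [hKdef]; ring
      linarith
    have hsplit : f t = (t ^ α * (1 - t) ^ β) ^ m * t ^ (-(1/2) : ℝ) := by
      rw [hfdef]
      simp only
      rw [ham1, hbm1, Real.rpow_add ht0, mul_comm (m:ℝ) α, mul_comm (m:ℝ) β,
        Real.rpow_mul ht0.le, Real.rpow_mul (by linarith : (0:ℝ) ≤ 1 - t),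
        Real.rpow_natCast, Real.rpow_natCast, mul_pow]
      ring
    have hhalf : 1 ≤ t ^ (-(1/2) : ℝ) :=
      Real.one_le_rpow_of_pos_of_le_one_of_nonpos ht0 ht1 (by norm_num)
    have hKm : (K/2)^m ≤ (t ^ α * (1 - t) ^ β) ^ m :=
      pow_le_pow_left₀ (by linarith [hK] : (0:ℝ) ≤ K/2) hta m
    calc (K/2)^m ≤ (t ^ α * (1 - t) ^ β) ^ m := hKm
      _ = (t ^ α * (1 - t) ^ β) ^ m * 1 := by ring
      _ ≤ (t ^ α * (1 - t) ^ β) ^ m * t ^ (-(1/2) : ℝ) := by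
          exact mul_le_mul_of_nonneg_left hhalf
            (pow_nonneg (mul_nonneg (Real.rpow_nonneg ht0.le α)
              (Real.rpow_nonneg (by linarith : (0:ℝ) ≤ 1 - t) β)) m)
      _ = f t := hsplit.symm
  -- integral lower bound
  have hI : (α/2) * (K/2)^m ≤ ∫ t in (0:ℝ)..1, f t := by
    have hle : α/2 ≤ α := by linarith
    have hsub : IntervalIntegrable f MeasureTheory.volume (α/2) α := by
      apply hIntBig.mono_set
      rw [Set.uIcc_of_le hle, Set.uIcc_of_le (by norm_num : (0:ℝ) ≤ 1)]
      exact Set.Icc_subset_Icc (by positivity) hα1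
    have h1 : ∫ _ in (α/2)..α, (K/2)^m ≤ ∫ t in (α/2)..α, f t :=
      intervalIntegral.integral_mono_on hle (intervalIntegrable_const) hsub hpoint
    have h2 : (∫ t in (α/2)..α, f t) ≤ ∫ t in (0:ℝ)..1, f t := by
      apply intervalIntegral.integral_mono_interval (by positivity) hle hα1 _ hIntBig
      filter_upwards [MeasureTheory.ae_restrict_mem measurableSet_Ioc] with t ht
      have ht0 : 0 < t := ht.1
      have ht1 : t ≤ 1 := ht.2
      have : (0:ℝ) ≤ 1 - t := by linarith
      rw [hfdef]
      positivity
    rw [intervalIntegral.integral_const, smul_eq_mul] at h1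
    calc (α/2) * (K/2)^m = (α - α/2) * (K/2)^m := by ring
      _ ≤ ∫ t in (α/2)..α, f t := h1
      _ ≤ _ := h2
  -- assemble
  set I : ℝ := ∫ t in (0:ℝ)..1, f t with hIdef
  have hc : 0 < (K/2:ℝ)^m := by positivity
  have hIpos : 0 < I := lt_of_lt_of_le (by positivity) hI
  have hΓ32 : 0 < Real.Gamma ((m:ℝ) + 3/2) := Real.Gamma_pos_of_pos (by positivity)
  have hfact : (Nat.factorial m : ℝ) = Real.Gamma ((m:ℝ) + 1) :=
    (Real.Gamma_nat_eq_factorial m).symm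
  rw [hfact, hbeta]
  calc Real.Gamma ((m:ℝ) + 1) / (Real.Gamma ((m:ℝ) + 3/2) * I)
      ≤ (2 * Real.Gamma ((m:ℝ) + 3/2)) /
        (Real.Gamma ((m:ℝ) + 3/2) * ((α/2) * (K/2)^m)) := by
        apply div_le_div₀ (by positivity) (gamma_ratio m) (by positivity)
        exact mul_le_mul_of_nonneg_left hI hΓ32.le
    _ = 4 / α * (2 / K) ^ m := by
        rw [div_pow, div_pow]
        field_simp
        ring
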